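/- Let Ω ⊆ ℝ² be open, v ∈ C^∞(Ω), p ∈ (1,∞), β > −1, and let x ∈ Ω be a point with Dv(x) ≠ 0 at which |Dv(x)|² Δv(x) + (p − 2) Δ∞v(x) = 0 (the p-Laplace equation in nondivergence form). Let G(y) = |Dv(y)|^{β} Dv(y), and write Λ := (1/(β+1)) |D(|Dv|^{β+1})(x)|². Then: if p = 2, −det DG(x) = Λ; if p > 2, −det DG(x) ≥ Λ; and if 1 < p < 2, (p − 1) Λ ≤ −det DG(x) ≤ Λ. -/

import Mathlib

open Real MeasureTheory
open scoped RealInnerProductSpace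

noncomputable section

/-- The Euclidean plane ℝ². -/
abbrev E2 : Type := EuclideanSpace ℝ (Fin 2)

/-- Standard basis vector. -/
def ee (i : Fin 2) : E2 := EuclideanSpace.single i (1 : ℝ)

/-- Partial derivative ∂ᵢf. -/
def pd (i : Fin 2) (f : E2 → ℝ) (x : E2) : ℝ := fderiv ℝ f x (ee i)

/-- Second partial derivative ∂ᵢ∂ⱼf. -/
def pd2 (i j : Fin 2) (f : E2 → ℝ) (x : E2) : ℝ := pd i (pd j f) x

/-- |Df|², squared Euclidean norm of the gradient. -/
def gradSq (f : E2 → ℝ) (x : E2) : ℝ := (pd 0 f x) ^ 2 + (pd 1 f x) ^ 2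

/-- |Df|, Euclidean norm of the gradient. -/
def gradNorm (f : E2 → ℝ) (x : E2) : ℝ := Real.sqrt (gradSq f x)

/-- Laplacian Δf = tr D²f. -/
def lap (f : E2 → ℝ) (x : E2) : ℝ := pd2 0 0 f x + pd2 1 1 f x

/-- ∞-Laplacian Δ∞f = D²f Df · Df. -/
def infLap (f : E2 → ℝ) (x : E2) : ℝ :=
  pd2 0 0 f x * pd 0 f x * pd 0 f x + pd2 0 1 f x * pd 0 f x * pd 1 f x +
  pd2 1 0 f x * pd 1 f x * pd 0 f x + pd2 1 1 f x * pd 1 f x * pd 1 f x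

/-- |D²f|², squared Frobenius norm of the Hessian. -/
def hessFrobSq (f : E2 → ℝ) (x : E2) : ℝ :=
  (pd2 0 0 f x) ^ 2 + (pd2 0 1 f x) ^ 2 + (pd2 1 0 f x) ^ 2 + (pd2 1 1 f x) ^ 2

/-- det D²f, determinant of the Hessian. -/
def detHess (f : E2 → ℝ) (x : E2) : ℝ :=
  pd2 0 0 f x * pd2 1 1 f x - pd2 0 1 f x * pd2 1 0 f x

/-- |D²f Df|². -/
def hessGradSq (f : E2 → ℝ) (x : E2) : ℝ :=
  (pd2 0 0 f x * pd 0 f x + pd2 0 1 f x * pd 1 f x) ^ 2 +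
  (pd2 1 0 f x * pd 0 f x + pd2 1 1 f x * pd 1 f x) ^ 2

/-- Jacobian determinant of the planar map with components `F 0`, `F 1`. -/
def jdet (F : Fin 2 → E2 → ℝ) (x : E2) : ℝ :=
  pd 0 (F 0) x * pd 1 (F 1) x - pd 1 (F 0) x * pd 0 (F 1) x

/-- Squared Frobenius norm of the Jacobian of the planar map with components `F 0`, `F 1`. -/
def jFrobSq (F : Fin 2 → E2 → ℝ) (x : E2) : ℝ :=
  (pd 0 (F 0) x) ^ 2 + (pd 1 (F 0) x) ^ 2 + (pd 0 (F 1) x) ^ 2 + (pd 1 (F 1) x) ^ 2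

/-- Df · Dg. -/
def gradDot (f g : E2 → ℝ) (x : E2) : ℝ :=
  pd 0 f x * pd 0 g x + pd 1 f x * pd 1 g x

/-- D²ψ Dv · Dv. -/
def hessQuad (ψ v : E2 → ℝ) (x : E2) : ℝ :=
  pd2 0 0 ψ x * pd 0 v x * pd 0 v x + pd2 0 1 ψ x * pd 0 v x * pd 1 v x +
  pd2 1 0 ψ x * pd 1 v x * pd 0 v x + pd2 1 1 ψ x * pd 1 v x * pd 1 v x

/-- (D²v Dv) · Dψ. -/
def hessGradDot (v ψ : E2 → ℝ) (x : E2) : ℝ :=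
  (pd2 0 0 v x * pd 0 v x + pd2 0 1 v x * pd 1 v x) * pd 0 ψ x +
  (pd2 1 0 v x * pd 0 v x + pd2 1 1 v x * pd 1 v x) * pd 1 ψ x

/-- Smooth compactly supported test function on Ω. -/
def IsTestOn (ψ : E2 → ℝ) (Ω : Set E2) : Prop :=
  ContDiff ℝ (⊤ : ℕ∞) ψ ∧ HasCompactSupport ψ ∧ tsupport ψ ⊆ Ω

/-- Components of W = |Dv|⁻¹ Dv. -/
def Wcomp (v : E2 → ℝ) (i : Fin 2) : E2 → ℝ := fun y => (gradNorm v y)⁻¹ * pd i v y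

set_option maxHeartbeats 2000000 in
/-- comparisons between −det DG, G = |Dv|^β Dv, and
(1/(β+1))|D(|Dv|^{β+1})|² at a point where the p-Laplace equation holds. -/
theorem stmt_12 (Ω : Set E2) (hΩ : IsOpen Ω) (v : E2 → ℝ)
    (hv : ContDiffOn ℝ (⊤ : ℕ∞) v Ω) (p : ℝ) (hp : 1 < p) (β : ℝ) (hβ : -1 < β)
    (x : E2) (hx : x ∈ Ω) (hgrad : gradSq v x ≠ 0)
    (hpl : gradSq v x * lap v x + (p - 2) * infLap v x = 0) :
    (p = 2 → -jdet (fun i y => gradNorm v y ^ β * pd i v y) x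
        = (1/(β+1)) * ((pd 0 (fun y => gradNorm v y ^ (β+1)) x) ^ 2
            + (pd 1 (fun y => gradNorm v y ^ (β+1)) x) ^ 2)) ∧
    (2 < p → (1/(β+1)) * ((pd 0 (fun y => gradNorm v y ^ (β+1)) x) ^ 2
            + (pd 1 (fun y => gradNorm v y ^ (β+1)) x) ^ 2)
        ≤ -jdet (fun i y => gradNorm v y ^ β * pd i v y) x) ∧
    (p < 2 →
      (p - 1) * ((1/(β+1)) * ((pd 0 (fun y => gradNorm v y ^ (β+1)) x) ^ 2
            + (pd 1 (fun y => gradNorm v y ^ (β+1)) x) ^ 2))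
        ≤ -jdet (fun i y => gradNorm v y ^ β * pd i v y) x ∧
      -jdet (fun i y => gradNorm v y ^ β * pd i v y) x
        ≤ (1/(β+1)) * ((pd 0 (fun y => gradNorm v y ^ (β+1)) x) ^ 2
            + (pd 1 (fun y => gradNorm v y ^ (β+1)) x) ^ 2)) := by

  -- ## Smoothness and derivative setup
  have hvx : ContDiffAt ℝ (⊤:ℕ∞) v x := hv.contDiffAt (hΩ.mem_nhds hx)
  have hdd : ContDiffAt ℝ (⊤:ℕ∞) (fderiv ℝ v) x := hvx.fderiv_right (by exact_mod_cast le_rfl)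
  have hu : ∀ j : Fin 2, DifferentiableAt ℝ (pd j v) x := by
    intro j
    exact ((hdd.clm_apply contDiffAt_const).differentiableAt (by simp) :
      DifferentiableAt ℝ (fun y => fderiv ℝ v y (ee j)) x)
  have hDu : ∀ j : Fin 2, HasFDerivAt (pd j v) (fderiv ℝ (pd j v) x) x :=
    fun j => (hu j).hasFDerivAt
  have hDuval : ∀ i j : Fin 2, fderiv ℝ (pd j v) x (ee i) = pd2 i j v x := fun i j => rfl
  -- symmetry of second derivatives
  have hx2 : HasFDerivAt (fderiv ℝ v) (fderiv ℝ (fderiv ℝ v) x) x :=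
    (hdd.differentiableAt (by simp)).hasFDerivAt
  have hev : ∀ᶠ y in nhds x, HasFDerivAt v (fderiv ℝ v y) y := by
    filter_upwards [hΩ.mem_nhds hx] with y hy
    exact ((hv.contDiffAt (hΩ.mem_nhds hy)).differentiableAt (by simp)).hasFDerivAt
  have hsymm : pd2 0 1 v x = pd2 1 0 v x := by
    have hsw := second_derivative_symmetric_of_eventually hev hx2 (ee 0) (ee 1)
    have hpd2 : ∀ i j : Fin 2, pd2 i j v x = fderiv ℝ (fderiv ℝ v) x (ee i) (ee j) := by
      intro i j
      show fderiv ℝ (fun y => fderiv ℝ v y (ee j)) x (ee i) = _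
      rw [fderiv_clm_apply (hdd.differentiableAt (by simp))
        (differentiableAt_const _)]
      simp
    rw [hpd2, hpd2, hsw]
  -- positivity of the gradient norm
  have hN0 : 0 < gradNorm v x := by
    have : 0 < gradSq v x := lt_of_le_of_ne (by unfold gradSq; positivity) (Ne.symm hgrad)
    exact Real.sqrt_pos.mpr this
  -- derivative of gradSq, gradNorm
  have hqd : HasFDerivAt (gradSq v)
      (pd 0 v x • fderiv ℝ (pd 0 v) x + pd 0 v x • fderiv ℝ (pd 0 v) x
        + (pd 1 v x • fderiv ℝ (pd 1 v) x + pd 1 v x • fderiv ℝ (pd 1 v) x)) x := by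
    have h := ((hDu 0).mul (hDu 0)).add ((hDu 1).mul (hDu 1))
    have hfun : gradSq v = fun y => pd 0 v y * pd 0 v y + pd 1 v y * pd 1 v y := by
      funext y; simp [gradSq, sq]
    rw [hfun]; exact h
  have hNd : HasFDerivAt (gradNorm v) ((1 / (2 * gradNorm v x)) •
      (pd 0 v x • fderiv ℝ (pd 0 v) x + pd 0 v x • fderiv ℝ (pd 0 v) x
        + (pd 1 v x • fderiv ℝ (pd 1 v) x + pd 1 v x • fderiv ℝ (pd 1 v) x))) x := by
    have hs : HasDerivAt Real.sqrt (1 / (2 * Real.sqrt (gradSq v x))) (gradSq v x) :=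
      Real.hasDerivAt_sqrt hgrad
    exact hs.comp_hasFDerivAt x hqd
  -- derivative of powers of the gradient norm
  have hpow : ∀ γ : ℝ, HasFDerivAt (fun y => gradNorm v y ^ γ)
      ((γ * gradNorm v x ^ (γ-1)) • ((1 / (2 * gradNorm v x)) •
      (pd 0 v x • fderiv ℝ (pd 0 v) x + pd 0 v x • fderiv ℝ (pd 0 v) x
        + (pd 1 v x • fderiv ℝ (pd 1 v) x + pd 1 v x • fderiv ℝ (pd 1 v) x)))) x := by
    intro γ
    have hr : HasDerivAt (fun t : ℝ => t ^ γ) (γ * gradNorm v x ^ (γ-1)) (gradNorm v x) :=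
      Real.hasDerivAt_rpow_const (Or.inl hN0.ne')
    exact hr.comp_hasFDerivAt x hNd
  -- the partial derivatives of the components of G
  have hG : ∀ i j : Fin 2, pd i (fun y => gradNorm v y ^ β * pd j v y) x
      = gradNorm v x ^ β * pd2 i j v x
        + pd j v x * (β * gradNorm v x ^ β *
            (pd 0 v x * pd2 i 0 v x + pd 1 v x * pd2 i 1 v x)
              / (gradNorm v x * gradNorm v x)) := by
    intro i j
    have hGd := (hpow β).mul (hDu j)
    rw [pd, show (fun y => gradNorm v y ^ β * pd j v y) = (fun y => gradNorm v y ^ β) * pd j v from rfl, hGd.fderiv]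
    simp only [ContinuousLinearMap.add_apply, ContinuousLinearMap.smul_apply, smul_eq_mul, hDuval]
    rw [Real.rpow_sub hN0, Real.rpow_one]
    field_simp
    ring
  -- the partial derivatives of |Dv|^(β+1)
  have hP : ∀ i : Fin 2, pd i (fun y => gradNorm v y ^ (β+1)) x
      = (β+1) * gradNorm v x ^ β *
          (pd 0 v x * pd2 i 0 v x + pd 1 v x * pd2 i 1 v x) / gradNorm v x := by
    intro i
    rw [pd, (hpow (β+1)).fderiv]
    simp only [ContinuousLinearMap.add_apply, ContinuousLinearMap.smul_apply, smul_eq_mul, hDuval]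
    rw [show β + 1 - 1 = β from by ring]
    field_simp
    ring
  -- rewrite the goal and the p-Laplace equation in coordinates
  have hq : (pd 0 v x)^2 + (pd 1 v x)^2 = gradNorm v x * gradNorm v x :=
    (Real.mul_self_sqrt (by positivity)).symm
  simp only [gradSq, lap, infLap] at hpl
  rw [← hsymm] at hpl
  simp only [jdet]
  rw [hG 0 0, hG 1 1, hG 1 0, hG 0 1, hP 0, hP 1, ← hsymm]
  have hβ1 : (0:ℝ) < β + 1 := by linarith
  have hB0 : 0 < gradNorm v x ^ β := Real.rpow_pos_of_pos hN0 β
  set a := pd 0 v x with ha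
  set b := pd 1 v x with hb
  set h00 := pd2 0 0 v x with hh00
  set c := pd2 0 1 v x with hc
  set h11 := pd2 1 1 v x with hh11
  set N := gradNorm v x with hN
  set B := N ^ β with hBdef
  clear_value B N h11 c h00 b a
  clear hqd hNd hpow hG hP hev hx2 hDu hDuval hu hvx hdd hv hsymm hgrad hΩ hx
  have hNN0 : (0:ℝ) < N * N := mul_pos hN0 hN0
  have hq0 : (0:ℝ) < a^2 + b^2 := by rw [hq]; exact hNN0
  have hfac : (0:ℝ) ≤ (β+1) * B^2 := by positivity
  -- key algebraic reductions
  have hJ : (B * h00 + a * (β * B * (a * h00 + b * c) / (N * N))) *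
        (B * h11 + b * (β * B * (a * c + b * h11) / (N * N))) -
      (B * c + a * (β * B * (a * c + b * h11) / (N * N))) *
        (B * c + b * (β * B * (a * h00 + b * c) / (N * N)))
      = (β + 1) * B^2 * (h00 * h11 - c^2) := by
    field_simp [hN0.ne']
    linear_combination (β * (h00 * h11 - c^2) * (N * N)) * hq
  have hΛ : 1/(β+1) * (((β+1) * B * (a * h00 + b * c) / N)^2
        + ((β+1) * B * (a * c + b * h11) / N)^2)
      = (β+1) * B^2 * ((a * h00 + b * c)^2 + (a * c + b * h11)^2) / (N * N) := by
    field_simp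
  refine ⟨fun hp2 => ?_, fun hp2 => ?_, fun hp2 => ?_⟩
  · -- p = 2
    subst hp2
    rw [hJ, hΛ, eq_div_iff hNN0.ne']
    have h20 : (a^2 + b^2) * (-(a^2 + b^2) * (h00 * h11 - c^2)
        - ((a * h00 + b * c)^2 + (a * c + b * h11)^2)) = 0 := by
      linear_combination (-(h00 * a * a + c * a * b + c * b * a + h11 * b * b)) * hpl
    have hS : (a * h00 + b * c)^2 + (a * c + b * h11)^2
        = -(a^2 + b^2) * (h00 * h11 - c^2) := by
      rcases mul_eq_zero.mp h20 with h | h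
      · exact absurd h hq0.ne'
      · linarith
    linear_combination (-((β+1) * B^2)) * hS + ((β+1) * B^2 * (h00 * h11 - c^2)) * hq
  · -- p > 2
    rw [hJ, hΛ, div_le_iff₀ hNN0, ← hq]
    have h2 : (a^2 + b^2) * (-(a^2 + b^2) * (h00 * h11 - c^2)
        - ((a * h00 + b * c)^2 + (a * c + b * h11)^2))
        = (p - 2) * (h00 * a * a + c * a * b + c * b * a + h11 * b * b)^2 := by
      linear_combination (-(h00 * a * a + c * a * b + c * b * a + h11 * b * b)) * hpl
    have hSD : (a * h00 + b * c)^2 + (a * c + b * h11)^2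
        ≤ -(a^2 + b^2) * (h00 * h11 - c^2) := by
      nlinarith [h2, hq0, mul_nonneg (show (0:ℝ) ≤ p - 2 by linarith)
        (sq_nonneg (h00 * a * a + c * a * b + c * b * a + h11 * b * b))]
    nlinarith [mul_le_mul_of_nonneg_left hSD hfac]
  constructor
  · -- p < 2, lower bound
    rw [hJ, hΛ, ← hq, mul_div_assoc', div_le_iff₀ hq0]
    have h3 : (a^2 + b^2) * (-(a^2 + b^2) * (h00 * h11 - c^2)
        - (p - 1) * ((a * h00 + b * c)^2 + (a * c + b * h11)^2))
        = (2 - p) * (a * (a * c + b * h11) - b * (a * h00 + b * c))^2 := by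
      linear_combination (-(h00 * a * a + c * a * b + c * b * a + h11 * b * b)) * hpl
    have key : (p - 1) * ((a * h00 + b * c)^2 + (a * c + b * h11)^2)
        ≤ -(a^2 + b^2) * (h00 * h11 - c^2) := by
      nlinarith [h3, hq0, mul_nonneg (show (0:ℝ) ≤ 2 - p by linarith)
        (sq_nonneg (a * (a * c + b * h11) - b * (a * h00 + b * c)))]
    nlinarith [mul_le_mul_of_nonneg_left key hfac]
  · -- p < 2, upper bound
    rw [hJ, hΛ, le_div_iff₀ hNN0, ← hq]
    have h4 : (a^2 + b^2) * (((a * h00 + b * c)^2 + (a * c + b * h11)^2)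
        + (a^2 + b^2) * (h00 * h11 - c^2))
        = (2 - p) * (h00 * a * a + c * a * b + c * b * a + h11 * b * b)^2 := by
      linear_combination (h00 * a * a + c * a * b + c * b * a + h11 * b * b) * hpl
    have hSD4 : -(a^2 + b^2) * (h00 * h11 - c^2)
        ≤ (a * h00 + b * c)^2 + (a * c + b * h11)^2 := by
      nlinarith [h4, hq0, mul_nonneg (show (0:ℝ) ≤ 2 - p by linarith)
        (sq_nonneg (h00 * a * a + c * a * b + c * b * a + h11 * b * b))]
    nlinarith [mul_le_mul_of_nonneg_left hSD4 hfac]
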